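/- For every positive integer n, the polynomial identity (2x+1)·∑_{k=1}^{n} k(k+1)(2k+1)·(-1)^{n-k}·w_k(x)^2 = n(n+1)(n+2)·w_n(x)·w_{n+1}(x) holds in ℤ[x]. -/

import Mathlib

open Polynomial

/-- `w(n,k) = C(n-1,k-1)·C(n+k,k) − C(n,k)·C(n+k,k-1)`. -/
def w (n k : ℕ) : ℤ :=
  ((n - 1).choose (k - 1) * (n + k).choose k : ℤ) - (n.choose k * (n + k).choose (k - 1) : ℤ)

/-- `w_n(x) = ∑_{k=1}^{n} w(n,k) x^{k-1}` in `ℤ[x]`. -/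
noncomputable def wPoly (n : ℕ) : Polynomial ℤ :=
  ∑ k ∈ Finset.Icc 1 n, Polynomial.C (w n k) * X ^ (k - 1)

open Nat in
lemma w_zero (n : ℕ) : w n 0 = 0 := by simp [w]

lemma w_one (n : ℕ) : w n 1 = 1 := by
  simp [w, Nat.choose_one_right]

lemma w_eq_zero (n k : ℕ) (hn : 1 ≤ n) (h : n < k) : w n k = 0 := by
  have h1 : (n-1).choose (k-1) = 0 := Nat.choose_eq_zero_of_lt (by omega)
  have h2 : n.choose k = 0 := Nat.choose_eq_zero_of_lt h
  simp [w, h1, h2]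

lemma w_closed (m j : ℕ) :
    ((m:ℤ)+2) * w (m+1) (j+1) = ((m+j+2).choose (j+1) : ℤ) * (m.choose j : ℤ) := by
  have h1 := Nat.add_one_mul_choose_eq m j
  have h2 := Nat.choose_succ_right_eq (m+j+2) j
  rw [show m+j+2-j = m+2 from by omega] at h2
  have e : w (m+1) (j+1) = ((m.choose j : ℤ) * ((m+j+2).choose (j+1) : ℤ)
      - ((m+1).choose (j+1) : ℤ) * ((m+j+2).choose j : ℤ)) := by
    simp only [w, Nat.add_sub_cancel]
    rw [show m+1+(j+1) = m+j+2 from by omega]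
  rw [e]
  zify at h1 h2
  linear_combination ((m+j+2).choose (j+1) : ℤ) * h1 + ((m+1).choose (j+1) : ℤ) * h2

open Nat in
lemma Wrec (m j : ℕ) :
    ((m:ℤ)+2)*((m:ℤ)+3) * ((m+j+5).choose (j+2) : ℤ) * ((m+2).choose (j+1) : ℤ)
  = ((m:ℤ)+2)*(2*(m:ℤ)+5) * (2 * ((m+j+3).choose (j+1) : ℤ) * ((m+1).choose j : ℤ)
        + ((m+j+4).choose (j+2) : ℤ) * ((m+1).choose (j+1) : ℤ))
    - ((m:ℤ)+1)*((m:ℤ)+3) * ((m+j+3).choose (j+2) : ℤ) * ((m).choose (j+1) : ℤ) := by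
  rcases lt_or_ge m (j+1) with hm | hm
  · have hj : j = m ∨ j = m + 1 ∨ m + 2 ≤ j := by omega
    rcases hj with rfl | rfl | h
    ·
        have key : ((j:ℚ)+2)*((j:ℚ)+3) * ((j+j+5).choose (j+2) : ℚ) * ((j+2).choose (j+1) : ℚ)
          = ((j:ℚ)+2)*(2*(j:ℚ)+5) * (2 * ((j+j+3).choose (j+1) : ℚ) * ((j+1).choose j : ℚ)
                + ((j+j+4).choose (j+2) : ℚ) * ((j+1).choose (j+1) : ℚ))
            - ((j:ℚ)+1)*((j:ℚ)+3) * ((j+j+3).choose (j+2) : ℚ) * ((j).choose (j+1) : ℚ) := by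
          have c1 : ((j+j+5).choose (j+2) : ℚ) = (j+j+5)! / ((j+2)! * (j+3)!) := by
            rw [Nat.cast_choose ℚ (by omega), show j+j+5-(j+2) = j+3 from by omega]
          have c2 : ((j+j+3).choose (j+1) : ℚ) = (j+j+3)! / ((j+1)! * (j+2)!) := by
            rw [Nat.cast_choose ℚ (by omega), show j+j+3-(j+1) = j+2 from by omega]
          have c3 : ((j+j+4).choose (j+2) : ℚ) = (j+j+4)! / ((j+2)! * (j+2)!) := by
            rw [Nat.cast_choose ℚ (by omega), show j+j+4-(j+2) = j+2 from by omega]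
          have c4 : ((j+j+3).choose (j+2) : ℚ) = (j+j+3)! / ((j+2)! * (j+1)!) := by
            rw [Nat.cast_choose ℚ (by omega), show j+j+3-(j+2) = j+1 from by omega]
          have c5 : (j+2).choose (j+1) = j+2 := Nat.succ_sub_one (j+2) ▸ Nat.choose_succ_self_right (j+1)
          have c6 : (j+1).choose j = j+1 := Nat.choose_succ_self_right j
          have c7 : (j+1).choose (j+1) = 1 := Nat.choose_self _
          have c8 : (j).choose (j+1) = 0 := Nat.choose_succ_self j
          rw [c1, c2, c3, c4, c5, c6, c7, c8]
          have f1 : ((j+j+5)! : ℚ) = (2*j+5)*(2*j+4)*((j+j+3)! : ℚ) := by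
            rw [show j+j+5 = (j+j+4)+1 from by ring, show j+j+4 = (j+j+3)+1 from by ring,
              Nat.factorial_succ, Nat.factorial_succ]
            push_cast; ring
          have f2 : ((j+j+4)! : ℚ) = (2*j+4)*((j+j+3)! : ℚ) := by
            rw [show j+j+4 = (j+j+3)+1 from by ring, Nat.factorial_succ]; push_cast; ring
          have f3 : ((j+3)! : ℚ) = (j+3)*(j+2)*((j+1)! : ℚ) := by
            rw [show j+3 = (j+2)+1 from by ring, show j+2 = (j+1)+1 from by ring,
              Nat.factorial_succ, Nat.factorial_succ]
            push_cast; ring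
          have f4 : ((j+2)! : ℚ) = (j+2)*((j+1)! : ℚ) := by
            rw [show j+2 = (j+1)+1 from by ring, Nat.factorial_succ]; push_cast; ring
          rw [f1, f2, f3, f4]
          have n1 : (((j+j+3)! : ℕ) : ℚ) ≠ 0 := Nat.cast_ne_zero.mpr (Nat.factorial_ne_zero _)
          have n2 : (((j+1)! : ℕ) : ℚ) ≠ 0 := Nat.cast_ne_zero.mpr (Nat.factorial_ne_zero _)
          field_simp
          push_cast
          ring
        exact_mod_cast key
    ·
        have key : ((m:ℚ)+2)*((m:ℚ)+3) * ((m+(m+1)+5).choose (m+3) : ℚ)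
            = ((m:ℚ)+2)*(2*(m:ℚ)+5) * (2 * ((m+(m+1)+3).choose (m+2) : ℚ)) := by
          have c1 : ((m+(m+1)+5).choose (m+3) : ℚ) = (m+(m+1)+5)! / ((m+3)! * (m+3)!) := by
            rw [Nat.cast_choose ℚ (by omega), show m+(m+1)+5-(m+3) = m+3 from by omega]
          have c2 : ((m+(m+1)+3).choose (m+2) : ℚ) = (m+(m+1)+3)! / ((m+2)! * (m+2)!) := by
            rw [Nat.cast_choose ℚ (by omega), show m+(m+1)+3-(m+2) = m+2 from by omega]
          rw [c1, c2]
          have f1 : ((m+(m+1)+5)! : ℚ) = (2*m+6)*(2*m+5)*((m+(m+1)+3)! : ℚ) := by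
            rw [show m+(m+1)+5 = (m+(m+1)+4)+1 from by ring, show m+(m+1)+4 = (m+(m+1)+3)+1 from by ring,
              Nat.factorial_succ, Nat.factorial_succ]
            push_cast; ring
          have f3 : ((m+3)! : ℚ) = (m+3)*((m+2)! : ℚ) := by
            rw [show m+3 = (m+2)+1 from by ring, Nat.factorial_succ]; push_cast; ring
          rw [f1, f3]
          have n1 : (((m+(m+1)+3)! : ℕ) : ℚ) ≠ 0 := Nat.cast_ne_zero.mpr (Nat.factorial_ne_zero _)
          have n2 : (((m+2)! : ℕ) : ℚ) ≠ 0 := Nat.cast_ne_zero.mpr (Nat.factorial_ne_zero _)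
          field_simp
          ring
        have c5 : (m+2).choose (m+1+1) = 1 := Nat.choose_self _
        have c6 : (m+1).choose (m+1) = 1 := Nat.choose_self _
        have c7 : (m+1).choose (m+1+1) = 0 := Nat.choose_succ_self _
        have c8 : (m).choose (m+1+1) = 0 := Nat.choose_eq_zero_of_lt (by omega)
        have key' : ((m:ℤ)+2)*((m:ℤ)+3) * ((m+(m+1)+5).choose (m+3) : ℤ)
            = ((m:ℤ)+2)*(2*(m:ℤ)+5) * (2 * ((m+(m+1)+3).choose (m+2) : ℤ)) := by exact_mod_cast key
        rw [c5, c6, c7, c8, show m+1+2 = m+3 from by omega, show m+1+1 = m+2 from by omega]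
        push_cast
        linarith [key']
    ·
        rw [Nat.choose_eq_zero_of_lt (show m+2 < j+1 from by omega),
          Nat.choose_eq_zero_of_lt (show m+1 < j from by omega),
          Nat.choose_eq_zero_of_lt (show m+1 < j+1 from by omega),
          Nat.choose_eq_zero_of_lt (show m < j+1 from by omega)]
        push_cast
        ring
  · -- generic case j + 1 ≤ m
    obtain ⟨d, rfl⟩ : ∃ d, m = j + 1 + d := ⟨m - (j+1), by omega⟩
    have key : ((j:ℚ)+1+d+2)*((j:ℚ)+1+d+3) * ((j+1+d+j+5).choose (j+2) : ℚ) * ((j+1+d+2).choose (j+1) : ℚ)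
      = ((j:ℚ)+1+d+2)*(2*((j:ℚ)+1+d)+5) * (2 * ((j+1+d+j+3).choose (j+1) : ℚ) * ((j+1+d+1).choose j : ℚ)
            + ((j+1+d+j+4).choose (j+2) : ℚ) * ((j+1+d+1).choose (j+1) : ℚ))
        - ((j:ℚ)+1+d+1)*((j:ℚ)+1+d+3) * ((j+1+d+j+3).choose (j+2) : ℚ) * ((j+1+d).choose (j+1) : ℚ) := by
      have c1 : ((j+1+d+j+5).choose (j+2) : ℚ) = (j+1+d+j+5)! / ((j+2)! * (j+d+4)!) := by
        rw [Nat.cast_choose ℚ (by omega), show j+1+d+j+5-(j+2) = j+d+4 from by omega]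
      have c2 : ((j+1+d+2).choose (j+1) : ℚ) = (j+1+d+2)! / ((j+1)! * (d+2)!) := by
        rw [Nat.cast_choose ℚ (by omega), show j+1+d+2-(j+1) = d+2 from by omega]
      have c3 : ((j+1+d+j+3).choose (j+1) : ℚ) = (j+1+d+j+3)! / ((j+1)! * (j+d+3)!) := by
        rw [Nat.cast_choose ℚ (by omega), show j+1+d+j+3-(j+1) = j+d+3 from by omega]
      have c4 : ((j+1+d+1).choose j : ℚ) = (j+1+d+1)! / (j ! * (d+2)!) := by
        rw [Nat.cast_choose ℚ (by omega), show j+1+d+1-j = d+2 from by omega]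
      have c5 : ((j+1+d+j+4).choose (j+2) : ℚ) = (j+1+d+j+4)! / ((j+2)! * (j+d+3)!) := by
        rw [Nat.cast_choose ℚ (by omega), show j+1+d+j+4-(j+2) = j+d+3 from by omega]
      have c6 : ((j+1+d+1).choose (j+1) : ℚ) = (j+1+d+1)! / ((j+1)! * (d+1)!) := by
        rw [Nat.cast_choose ℚ (by omega), show j+1+d+1-(j+1) = d+1 from by omega]
      have c7 : ((j+1+d+j+3).choose (j+2) : ℚ) = (j+1+d+j+3)! / ((j+2)! * (j+d+2)!) := by
        rw [Nat.cast_choose ℚ (by omega), show j+1+d+j+3-(j+2) = j+d+2 from by omega]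
      have c8 : ((j+1+d).choose (j+1) : ℚ) = (j+1+d)! / ((j+1)! * d !) := by
        rw [Nat.cast_choose ℚ (by omega), show j+1+d-(j+1) = d from by omega]
      rw [c1, c2, c3, c4, c5, c6, c7, c8]
      -- factorial reductions to bases (2j+d+3)!, (j+d+1)!... choose bases:
      have f1 : ((j+1+d+j+5)! : ℚ) = (2*j+d+6)*(2*j+d+5)*((j+1+d+j+3)! : ℚ) := by
        rw [show j+1+d+j+5 = (j+1+d+j+4)+1 from by ring, show j+1+d+j+4 = (j+1+d+j+3)+1 from by ring,
          Nat.factorial_succ, Nat.factorial_succ]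
        push_cast; ring
      have f2 : ((j+1+d+j+4)! : ℚ) = (2*j+d+5)*((j+1+d+j+3)! : ℚ) := by
        rw [show j+1+d+j+4 = (j+1+d+j+3)+1 from by ring, Nat.factorial_succ]; push_cast; ring
      have f3 : ((j+d+4)! : ℚ) = (j+d+4)*(j+d+3)*((j+d+2)! : ℚ) := by
        rw [show j+d+4 = (j+d+3)+1 from by ring, show j+d+3 = (j+d+2)+1 from by ring,
          Nat.factorial_succ, Nat.factorial_succ]
        push_cast; ring
      have f4 : ((j+d+3)! : ℚ) = (j+d+3)*((j+d+2)! : ℚ) := by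
        rw [show j+d+3 = (j+d+2)+1 from by ring, Nat.factorial_succ]; push_cast; ring
      have f5 : ((j+1+d+2)! : ℚ) = (j+d+3)*(j+d+2)*((j+1+d)! : ℚ) := by
        rw [show j+1+d+2 = (j+1+d+1)+1 from by ring, show j+1+d+1 = (j+1+d)+1 from by ring,
          Nat.factorial_succ, Nat.factorial_succ]
        push_cast; ring
      have f6 : ((j+1+d+1)! : ℚ) = (j+d+2)*((j+1+d)! : ℚ) := by
        rw [show j+1+d+1 = (j+1+d)+1 from by ring, Nat.factorial_succ]; push_cast; ring
      have f7 : ((j+2)! : ℚ) = (j+2)*(j+1)*(j ! : ℚ) := by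
        rw [show j+2 = (j+1)+1 from by ring, Nat.factorial_succ, Nat.factorial_succ]; push_cast; ring
      have f8 : ((j+1)! : ℚ) = (j+1)*(j ! : ℚ) := by
        rw [Nat.factorial_succ]; push_cast; ring
      have f9 : ((d+2)! : ℚ) = (d+2)*(d+1)*(d ! : ℚ) := by
        rw [show d+2 = (d+1)+1 from by ring, Nat.factorial_succ, Nat.factorial_succ]; push_cast; ring
      have f10 : ((d+1)! : ℚ) = (d+1)*(d ! : ℚ) := by
        rw [Nat.factorial_succ]; push_cast; ring
      rw [f1, f2, f3, f4, f5, f6, f7, f8, f9, f10]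
      have n1 : ((j+1+d+j+3)! : ℚ) ≠ 0 := Nat.cast_ne_zero.mpr (Nat.factorial_ne_zero _)
      have n2 : ((j+d+2)! : ℚ) ≠ 0 := Nat.cast_ne_zero.mpr (Nat.factorial_ne_zero _)
      have n3 : ((j+1+d)! : ℚ) ≠ 0 := Nat.cast_ne_zero.mpr (Nat.factorial_ne_zero _)
      have n4 : ((j ! : ℕ) : ℚ) ≠ 0 := Nat.cast_ne_zero.mpr (Nat.factorial_ne_zero _)
      have n5 : ((d ! : ℕ) : ℚ) ≠ 0 := Nat.cast_ne_zero.mpr (Nat.factorial_ne_zero _)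
      field_simp
      ring
    push_cast
    exact_mod_cast key

lemma w_rec_coeff (m i : ℕ) :
    ((m:ℤ)+4) * w (m+3) (i+2)
      = (2*(m:ℤ)+5) * (2 * w (m+2) (i+1) + w (m+2) (i+2)) - ((m:ℤ)+1) * w (m+1) (i+2) := by
  have hne : ((m:ℤ)+2)*((m:ℤ)+3) ≠ 0 := by positivity
  apply mul_left_cancel₀ hne
  have h1 := w_closed (m+2) (i+1)
  rw [show m+2+(i+1)+2 = m+i+5 from by omega, show m+2+1 = m+3 from by omega,
    show i+1+1 = i+2 from by omega] at h1
  have h2 := w_closed (m+1) i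
  rw [show m+1+i+2 = m+i+3 from by omega, show m+1+1 = m+2 from by omega] at h2
  have h3 := w_closed (m+1) (i+1)
  rw [show m+1+(i+1)+2 = m+i+4 from by omega, show m+1+1 = m+2 from by omega,
    show i+1+1 = i+2 from by omega] at h3
  have h4 := w_closed m (i+1)
  rw [show m+(i+1)+2 = m+i+3 from by omega, show i+1+1 = i+2 from by omega] at h4
  have hW := Wrec m i
  push_cast at h1 h2 h3 h4 ⊢
  linear_combination ((m:ℤ)+2)*((m:ℤ)+3)*h1 + hW - 2*((m:ℤ)+2)*(2*(m:ℤ)+5)*h2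
    - ((m:ℤ)+2)*(2*(m:ℤ)+5)*h3 + ((m:ℤ)+1)*((m:ℤ)+3)*h4

lemma wPoly_coeff (n : ℕ) (hn : 1 ≤ n) (j : ℕ) : (wPoly n).coeff j = w n (j+1) := by
  rw [wPoly, Polynomial.finset_sum_coeff]
  simp only [Polynomial.coeff_C_mul, Polynomial.coeff_X_pow]
  rw [Finset.sum_eq_single (j+1)]
  · simp
  · intro b hb hne
    have hb1 : 1 ≤ b := (Finset.mem_Icc.mp hb).1
    have : j ≠ b - 1 := by omega
    simp [this]
  · intro hb
    have : n < j + 1 := by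
      simp only [Finset.mem_Icc] at hb; omega
    simp [w_eq_zero n (j+1) hn this]

lemma wPoly_rec (m : ℕ) :
    ((m:ℤ)+4) • wPoly (m+3)
      = (2*(m:ℤ)+5) • ((2*X+1) * wPoly (m+2)) - ((m:ℤ)+1) • wPoly (m+1) := by
  have hC2 : (C 2 : Polynomial ℤ) = 2 := by norm_num
  have hexp : (2*X+1) * wPoly (m+2) = C 2 * (X * wPoly (m+2)) + wPoly (m+2) := by
    rw [hC2]; ring
  ext j
  simp only [Polynomial.coeff_smul, Polynomial.coeff_sub, hexp, Polynomial.coeff_add,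
    Polynomial.coeff_C_mul, smul_eq_mul]
  rcases j with _ | i
  · rw [Polynomial.mul_coeff_zero, wPoly_coeff _ (by omega), wPoly_coeff _ (by omega),
      wPoly_coeff _ (by omega)]
    simp [w_one]
    ring
  · rw [Polynomial.coeff_X_mul, wPoly_coeff _ (by omega), wPoly_coeff _ (by omega),
      wPoly_coeff _ (by omega), wPoly_coeff _ (by omega)]
    exact w_rec_coeff m i

lemma wPoly_one : wPoly 1 = 1 := by
  simp [wPoly, Finset.Icc_self, w_one]

lemma wPoly_two : wPoly 2 = 2 * X + 1 := by
  have h2 : Finset.Icc 1 2 = {1, 2} := rfl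
  have hw21 : w 2 1 = 1 := w_one 2
  have hw22 : w 2 2 = 2 := by norm_num [w, Nat.choose]
  rw [wPoly, h2]
  simp [hw21, hw22]
  ring

/-- For every positive integer `n`,
`(2x+1)·∑_{k=1}^{n} k(k+1)(2k+1)(-1)^{n-k} w_k(x)² = n(n+1)(n+2)·w_n(x)·w_{n+1}(x)`. -/
theorem wPoly_sum_identity (n : ℕ) (hn : 1 ≤ n) :
    (2 * X + 1) *
        ∑ k ∈ Finset.Icc 1 n,
          (((k : ℤ) * (k + 1) * (2 * k + 1)) * (-1 : ℤ) ^ (n - k)) • (wPoly k) ^ 2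
      = ((n : ℤ) * (n + 1) * (n + 2)) • (wPoly n * wPoly (n + 1)) := by
  induction n with
  | zero => exact absurd hn (by omega)
  | succ n ih =>
    rcases Nat.eq_zero_or_pos n with rfl | hpos
    · -- base case n = 1
      rw [Finset.Icc_self, Finset.sum_singleton, wPoly_one, wPoly_two]
      simp only [Polynomial.smul_eq_C_mul]
      push_cast
      norm_num
      ring
    · have IH := ih hpos
      obtain ⟨m, rfl⟩ : ∃ m, n = m + 1 := ⟨n - 1, by omega⟩
      rw [Finset.sum_Icc_succ_top (by omega : 1 ≤ m + 1 + 1)]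
      have hsign : ∀ k ∈ Finset.Icc 1 (m+1),
          (((k : ℤ) * (k + 1) * (2 * k + 1)) * (-1 : ℤ) ^ (m + 1 + 1 - k)) • (wPoly k) ^ 2
          = (-1 : ℤ) • ((((k : ℤ) * (k + 1) * (2 * k + 1)) * (-1 : ℤ) ^ (m + 1 - k)) • (wPoly k) ^ 2) := by
        intro k hk
        have hk' : k ≤ m + 1 := (Finset.mem_Icc.mp hk).2
        rw [smul_smul, show m + 1 + 1 - k = (m + 1 - k) + 1 from by omega, pow_succ]
        ring_nf
      rw [Finset.sum_congr rfl hsign, ← Finset.smul_sum]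
      have hrec := wPoly_rec m
      set S := ∑ k ∈ Finset.Icc 1 (m+1),
          (((k : ℤ) * (k + 1) * (2 * k + 1)) * (-1 : ℤ) ^ (m + 1 - k)) • (wPoly k) ^ 2 with hS
      rw [show m + 1 + 1 - (m + 1 + 1) = 0 from by omega]
      simp only [Polynomial.smul_eq_C_mul] at IH hrec ⊢
      push_cast at IH hrec ⊢
      simp only [map_add, map_mul, map_one, map_ofNat, map_pow, map_neg, map_natCast] at IH hrec ⊢
      linear_combination (-1 : Polynomial ℤ) * IH
        - (((m : Polynomial ℤ) + 2) * ((m : Polynomial ℤ) + 3) * wPoly (m + 2)) * hrec
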